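/- Over a field of characteristic p > 2, every irreducible representation of sl2 has dimension at most p. -/

import Mathlib

set_option linter.unusedSectionVars false
set_option maxHeartbeats 1000000

open LieModule Module LieAlgebra.SpecialLinear




section Aux

variable {k L V : Type*} [Field k] [LieRing L] [LieAlgebra k L]
  [AddCommGroup V] [Module k V] [LieRingModule L V] [LieModule k L V]

/-- Schur's lemma: an endomorphism commuting with the Lie module structure is a scalar. -/
lemma schur_scalar [IsAlgClosed k] [FiniteDimensional k V] [LieModule.IsIrreducible k L V]
    (Φ : Module.End k V) (hΦ : ∀ (x : L) (v : V), Φ ⁅x, v⁆ = ⁅x, Φ v⁆) :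
    ∃ c : k, Φ = c • (1 : Module.End k V) := by
  have : Nontrivial V := LieModule.nontrivial_of_isIrreducible k L V
  obtain ⟨μ, hμ⟩ := Module.End.exists_eigenvalue Φ
  obtain ⟨v, hv⟩ := hμ.exists_hasEigenvector
  refine ⟨μ, ?_⟩
  set W : LieSubmodule k L V :=
    { toSubmodule := Module.End.eigenspace Φ μ
      lie_mem := by
        intro x m hm
        replace hm : Φ m = μ • m := Module.End.mem_eigenspace_iff.mp hm
        exact Module.End.mem_eigenspace_iff.mpr (by rw [hΦ, hm, lie_smul]) }
  have hWne : W ≠ ⊥ := by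
    intro hbot
    have : v ∈ W := by
      simpa [W, Module.End.mem_eigenspace_iff] using hv.apply_eq_smul
    rw [hbot] at this
    exact hv.right (by simpa using this)
  have hWtop : W = ⊤ := (eq_bot_or_eq_top W).resolve_left hWne
  ext w
  have hw : w ∈ W := hWtop ▸ LieSubmodule.mem_top w
  simpa [W, Module.End.mem_eigenspace_iff] using hw

end Aux



section PowComm

lemma pow_mul_expand {R : Type*} [Ring R] (A B : R)
    (h3 : A * (A * (A * B - B * A) - (A * B - B * A) * A)
        = (A * (A * B - B * A) - (A * B - B * A) * A) * A) (n : ℕ) :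
    A ^ (n + 2) * B = B * A ^ (n + 2) + (n + 2) • ((A * B - B * A) * A ^ (n + 1))
      + ((n + 2).choose 2) • ((A * (A * B - B * A) - (A * B - B * A) * A) * A ^ n) := by
  set B₁ := A * B - B * A with hB₁
  set B₂ := A * B₁ - B₁ * A with hB₂
  have hab : A * B = B * A + B₁ := by rw [hB₁]; noncomm_ring
  have hab1 : A * B₁ = B₁ * A + B₂ := by rw [hB₂]; noncomm_ring
  induction n with
  | zero =>
    show A ^ (0 + 2) * B = B * A ^ (0 + 2) + 2 • (B₁ * A ^ (0 + 1)) + 1 • (B₂ * A ^ 0)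
    calc A ^ (0 + 2) * B = A * (A * B) := by noncomm_ring
      _ = A * (B * A) + A * B₁ := by rw [hab, mul_add]
      _ = (A * B) * A + (B₁ * A + B₂) := by rw [hab1, ← mul_assoc]
      _ = (B * A + B₁) * A + (B₁ * A + B₂) := by rw [hab]
      _ = B * A ^ (0 + 2) + 2 • (B₁ * A ^ (0 + 1)) + 1 • (B₂ * A ^ 0) := by
        simp only [Nat.zero_add, pow_one, pow_zero, mul_one, one_smul, two_smul]
        noncomm_ring
  | succ m ih =>
    have h1 : A ^ (m + 1 + 2) * B = A * (A ^ (m + 2) * B) := by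
      rw [← mul_assoc, ← pow_succ']
    rw [h1, ih, mul_add, mul_add, mul_smul_comm, mul_smul_comm, ← mul_assoc A B, hab,
      ← mul_assoc A B₁, hab1, ← mul_assoc A B₂, h3]
    have hc : (m + 1 + 2).choose 2 = (m + 2).choose 2 + (m + 2) := by
      have h2 : (m + 3).choose 2 = (m + 2).choose 1 + (m + 2).choose 2 :=
        Nat.choose_succ_succ (m + 2) 1
      simp only [Nat.choose_one_right] at h2
      show (m + 3).choose 2 = _
      omega
    rw [hc]
    have hs : (m + 1 + 2) = (m + 2) + 1 := rfl
    rw [hs, succ_nsmul]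
    simp only [add_smul, add_mul, smul_mul_assoc]
    have e1 : B * A * A ^ (m + 2) = B * A ^ (m + 2 + 1) := by rw [mul_assoc, ← pow_succ']
    have e2 : B₁ * A * A ^ (m + 1) = B₁ * A ^ (m + 2) := by rw [mul_assoc, ← pow_succ']
    have e3 : B₂ * A * A ^ m = B₂ * A ^ (m + 1) := by rw [mul_assoc, ← pow_succ']
    rw [e1, e2, e3]
    simp only [smul_add]
    abel

end PowComm





section Sl2Lemmas

variable {k L V : Type*} [Field k] [LieRing L] [LieAlgebra k L]
  [AddCommGroup V] [Module k V] [LieRingModule L V] [LieModule k L V]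
  {h e f : L}

/-- The action of `h` on `fⁿ w` for an `h`-eigenvector `w`. -/
lemma my_lie_h_pow (t : IsSl2Triple h e f) {w : V} {lam : k} (hw : ⁅h, w⁆ = lam • w) (n : ℕ) :
    ⁅h, ((toEnd k L V f) ^ n) w⁆ = (lam - 2 * n) • ((toEnd k L V f) ^ n) w := by
  induction n with
  | zero => simpa using hw
  | succ n ih =>
    rw [pow_succ', Module.End.mul_apply, toEnd_apply_apply, Nat.cast_add, Nat.cast_one,
      leibniz_lie h, t.lie_lie_smul_f k, ← neg_smul, ih, lie_smul, smul_lie, ← add_smul]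
    congr 1
    ring

/-- The action of `e` on `fⁿ⁺¹ w` for an `h`-eigenvector `w`. -/
lemma my_lie_e_pow (t : IsSl2Triple h e f) {w : V} {lam : k} (hw : ⁅h, w⁆ = lam • w) (n : ℕ) :
    ⁅e, ((toEnd k L V f) ^ (n + 1)) w⁆
      = ((toEnd k L V f) ^ (n + 1)) ⁅e, w⁆
        + (((n : k) + 1) * (lam - n)) • ((toEnd k L V f) ^ n) w := by
  induction n with
  | zero =>
    simp only [pow_one, toEnd_apply_apply, Nat.cast_zero, sub_zero, zero_add, one_mul,
      pow_zero, Module.End.one_apply]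
    rw [leibniz_lie e, t.lie_e_f, hw]
    abel
  | succ n ih =>
    rw [pow_succ', Module.End.mul_apply, toEnd_apply_apply, leibniz_lie e, t.lie_e_f,
      my_lie_h_pow t hw, ih, lie_add, lie_smul, ← toEnd_apply_apply k L V f,
      ← Module.End.mul_apply, ← pow_succ', ← toEnd_apply_apply k L V f (((toEnd k L V f) ^ n) w),
      ← Module.End.mul_apply, ← pow_succ']
    rw [Nat.cast_add, Nat.cast_one]
    rw [add_comm, add_assoc, ← add_smul]
    congr 2
    ring

end Sl2Lemmas





section Span

variable {k L V : Type*} [Field k] [LieRing L] [LieAlgebra k L]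
  [AddCommGroup V] [Module k V] [FiniteDimensional k V] [LieRingModule L V] [LieModule k L V]

lemma finrank_le_of_spanning [LieModule.IsIrreducible k L V] {p : ℕ} (hp : 0 < p) {h e f : L}
    (hspan : ∀ x : L, x ∈ Submodule.span k ({h, e, f} : Set L))
    (g : ℕ → V) (hg0 : g 0 ≠ 0)
    (sth : ∀ i < p, ⁅h, g i⁆ ∈ Submodule.span k (g '' Set.Iio p))
    (ste : ∀ i < p, ⁅e, g i⁆ ∈ Submodule.span k (g '' Set.Iio p))
    (stf : ∀ i < p, ⁅f, g i⁆ ∈ Submodule.span k (g '' Set.Iio p)) :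
    Module.finrank k V ≤ p := by
  set Wsub : Submodule k V := Submodule.span k (g '' Set.Iio p) with hWsub
  have hgen : ∀ x : L, ∀ i < p, ⁅x, g i⁆ ∈ Wsub := by
    intro x i hi
    refine Submodule.span_induction (p := fun y _ => ⁅y, g i⁆ ∈ Wsub) ?_ ?_ ?_ ?_ (hspan x)
    · rintro y (rfl | rfl | rfl)
      · exact sth i hi
      · exact ste i hi
      · exact stf i hi
    · simp
    · intro a b _ _ ha hb
      rw [add_lie]; exact Wsub.add_mem ha hb
    · intro c a _ ha
      rw [smul_lie]; exact Wsub.smul_mem c ha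
  have hlie : ∀ (x : L) (m : V), m ∈ Wsub → ⁅x, m⁆ ∈ Wsub := by
    intro x m hm
    refine Submodule.span_induction (p := fun y _ => ⁅x, y⁆ ∈ Wsub) ?_ ?_ ?_ ?_ hm
    · rintro y ⟨i, hi, rfl⟩
      exact hgen x i hi
    · simp
    · intro a b _ _ ha hb
      rw [lie_add]; exact Wsub.add_mem ha hb
    · intro c a _ ha
      rw [lie_smul]; exact Wsub.smul_mem c ha
  set W : LieSubmodule k L V := { toSubmodule := Wsub, lie_mem := fun {x m} hm => hlie x m hm }
  have hmem : g 0 ∈ W := Submodule.subset_span ⟨0, hp, rfl⟩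
  have hWbot : W ≠ ⊥ := by
    intro hbot
    rw [hbot] at hmem
    exact hg0 (by simpa using hmem)
  have hWtop : W = ⊤ := (eq_bot_or_eq_top W).resolve_left hWbot
  have htop : Wsub = ⊤ := by
    have := congrArg (fun (N : LieSubmodule k L V) => (N : Submodule k V)) hWtop
    simpa [W] using this
  classical
  have himg : g '' Set.Iio p = (((Finset.range p).image g : Finset V) : Set V) := by
    ext y
    simp [Set.mem_image, Finset.mem_image]
  rw [← finrank_top k V, ← htop, hWsub, himg]
  exact (finrank_span_finset_le_card _).trans ((Finset.card_image_le).trans (by simp))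

end Span





section Master

variable {k L V : Type*} [Field k] [IsAlgClosed k] [LieRing L] [LieAlgebra k L]
  [AddCommGroup V] [Module k V] [FiniteDimensional k V] [LieRingModule L V] [LieModule k L V]
  [LieModule.IsIrreducible k L V]

omit [IsAlgClosed k] [FiniteDimensional k V] [LieModule.IsIrreducible k L V] in
/-- If `x` satisfies `(ad x)³ = 0` on `L` then `(toEnd x)^p` commutes with the action. -/
lemma pow_char_commutes (p : ℕ) [CharP k p] (hp : p.Prime) (hp2 : 2 < p) (x : L)
    (hx3 : ∀ y : L, ⁅x, ⁅x, ⁅x, y⁆⁆⁆ = 0) (y : L) :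
    (toEnd k L V x) ^ p * toEnd k L V y = toEnd k L V y * (toEnd k L V x) ^ p := by
  set A := toEnd k L V x with hA
  set B := toEnd k L V y with hB
  have mapc : ∀ z1 z2 : L, toEnd k L V z1 * toEnd k L V z2 - toEnd k L V z2 * toEnd k L V z1
      = toEnd k L V ⁅z1, z2⁆ := by
    intro z1 z2
    letI : LieRing (Module.End k V) := LieRing.ofAssociativeRing
    rw [LieHom.map_lie (toEnd k L V) z1 z2, Ring.lie_def]
  have c1 : A * B - B * A = toEnd k L V ⁅x, y⁆ := mapc x y
  have c2 : A * toEnd k L V ⁅x, y⁆ - toEnd k L V ⁅x, y⁆ * A = toEnd k L V ⁅x, ⁅x, y⁆⁆ :=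
    mapc x ⁅x, y⁆
  have c3 : A * toEnd k L V ⁅x, ⁅x, y⁆⁆ - toEnd k L V ⁅x, ⁅x, y⁆⁆ * A = 0 := by
    rw [mapc x ⁅x, ⁅x, y⁆⁆, hx3 y, map_zero]
  have h3 : A * (A * (A * B - B * A) - (A * B - B * A) * A)
      = (A * (A * B - B * A) - (A * B - B * A) * A) * A := by
    rw [c1, c2]
    exact sub_eq_zero.mp c3
  have hex := pow_mul_expand A B h3 (p - 2)
  rw [Nat.sub_add_cancel hp2.le] at hex
  rw [← Nat.cast_smul_eq_nsmul k p, ← Nat.cast_smul_eq_nsmul k (p.choose 2),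
    CharP.cast_eq_zero k p,
    (CharP.cast_eq_zero_iff k p _).mpr (hp.dvd_choose_self (by norm_num) hp2),
    zero_smul, zero_smul, add_zero, add_zero] at hex
  exact hex

lemma master (p : ℕ) [CharP k p] (hp : p.Prime) (hp2 : 2 < p)
    {h e f : L} (t : IsSl2Triple h e f)
    (hspan : ∀ x : L, x ∈ Submodule.span k ({h, e, f} : Set L)) :
    Module.finrank k V ≤ p := by
  have : Nontrivial V := LieModule.nontrivial_of_isIrreducible k L V
  set E := toEnd k L V e with hE
  set F := toEnd k L V f with hF
  set H := toEnd k L V h with hH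
  -- (ad e)³ = 0 and (ad f)³ = 0
  have ade3 : ∀ y : L, ⁅e, ⁅e, ⁅e, y⁆⁆⁆ = 0 := by
    intro y
    have base : ∀ z ∈ ({h, e, f} : Set L), ⁅e, ⁅e, ⁅e, z⁆⁆⁆ = 0 := by
      rintro z (rfl | rfl | rfl)
      · have h1 : ⁅e, z⁆ = -(2 • e) := by
          rw [← lie_skew, t.lie_h_e_nsmul]
        rw [h1]; simp
      · simp
      · rw [t.lie_e_f]
        have h1 : ⁅e, h⁆ = -(2 • e) := by
          rw [← lie_skew, t.lie_h_e_nsmul]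
        rw [h1]; simp
    refine Submodule.span_induction (p := fun z _ => ⁅e, ⁅e, ⁅e, z⁆⁆⁆ = 0) base ?_ ?_ ?_ (hspan y)
    · simp
    · intro a b _ _ ha hb; rw [lie_add, lie_add, lie_add, ha, hb, add_zero]
    · intro c a _ ha; rw [lie_smul, lie_smul, lie_smul, ha, smul_zero]
  have adf3 : ∀ y : L, ⁅f, ⁅f, ⁅f, y⁆⁆⁆ = 0 := by
    intro y
    have base : ∀ z ∈ ({h, e, f} : Set L), ⁅f, ⁅f, ⁅f, z⁆⁆⁆ = 0 := by
      rintro z (rfl | rfl | rfl)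
      · have h1 : ⁅f, z⁆ = 2 • f := by
          rw [← lie_skew, t.lie_h_f_nsmul]; simp
        rw [h1]; simp
      · have h1 : ⁅f, z⁆ = -h := by rw [← lie_skew, t.lie_e_f]
        have h2 : ⁅f, h⁆ = 2 • f := by
          rw [← lie_skew, t.lie_h_f_nsmul]; simp
        rw [h1, lie_neg, h2]; simp
      · simp
    refine Submodule.span_induction (p := fun z _ => ⁅f, ⁅f, ⁅f, z⁆⁆⁆ = 0) base ?_ ?_ ?_ (hspan y)
    · simp
    · intro a b _ _ ha hb; rw [lie_add, lie_add, lie_add, ha, hb, add_zero]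
    · intro c a _ ha; rw [lie_smul, lie_smul, lie_smul, ha, smul_zero]
  -- Schur scalars for E^p and F^p
  have hEcomm : ∀ (x : L) (v : V), (E ^ p) ⁅x, v⁆ = ⁅x, (E ^ p) v⁆ := by
    intro x v
    have h1 := pow_char_commutes (k := k) (L := L) (V := V) p hp hp2 e ade3 x
    have h2 := LinearMap.congr_fun h1 v
    simp only [Module.End.mul_apply] at h2
    rw [← hE] at h2
    rw [← toEnd_apply_apply k L V x v, ← toEnd_apply_apply k L V x ((E ^ p) v)]
    exact h2
  have hFcomm : ∀ (x : L) (v : V), (F ^ p) ⁅x, v⁆ = ⁅x, (F ^ p) v⁆ := by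
    intro x v
    have h1 := pow_char_commutes (k := k) (L := L) (V := V) p hp hp2 f adf3 x
    have h2 := LinearMap.congr_fun h1 v
    simp only [Module.End.mul_apply] at h2
    rw [← hF] at h2
    rw [← toEnd_apply_apply k L V x v, ← toEnd_apply_apply k L V x ((F ^ p) v)]
    exact h2
  obtain ⟨a, ha⟩ := schur_scalar (E ^ p) hEcomm
  obtain ⟨b, hb⟩ := schur_scalar (F ^ p) hFcomm
  -- an eigenvector of H
  obtain ⟨lam, hlam⟩ := Module.End.exists_eigenvalue H
  obtain ⟨w₀, hw₀⟩ := hlam.exists_hasEigenvector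
  have hw0lie : ⁅h, w₀⁆ = lam • w₀ := by
    rw [← toEnd_apply_apply k, ← hH]; exact hw₀.apply_eq_smul
  by_cases hbz : b = 0
  · -- Case F^p = 0 : find primitive vector for the F-chain, span by E-powers
    have hFp : F ^ p = 0 := by rw [hb, hbz, zero_smul]
    have hex : ∃ n, (F ^ n) w₀ = 0 := by
      refine ⟨p, ?_⟩
      rw [hFp]
      rfl
    have hne : ¬ ((F ^ 0) w₀ = 0) := by simpa using hw₀.right
    obtain ⟨n, hn1, hn2⟩ := Nat.exists_not_and_succ_of_not_zero_of_exists hne hex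
    set v := (F ^ n) w₀ with hv
    have hfv : ⁅f, v⁆ = 0 := by
      rw [← toEnd_apply_apply k, ← hF, hv, ← Module.End.mul_apply, ← pow_succ']
      exact hn2
    have hhv : ⁅h, v⁆ = (lam - 2 * n) • v := my_lie_h_pow t hw0lie n
    have P : t.symm.HasPrimitiveVectorWith v (-(lam - 2 * n)) :=
      { ne_zero := hn1
        lie_h := by rw [neg_lie, hhv, neg_smul]
        lie_e := hfv }
    set g : ℕ → V := fun j => (E ^ j) v with hg
    have hgE : ∀ j, ⁅e, g j⁆ = g (j + 1) := by
      intro j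
      show ⁅e, g j⁆ = (E ^ (j + 1)) v
      rw [pow_succ', Module.End.mul_apply]
      exact (toEnd_apply_apply k L V e ((E ^ j) v)).symm
    set Wsub := Submodule.span k (g '' Set.Iio p) with hWsub
    have hgmem : ∀ j, j < p → g j ∈ Wsub := fun j hj => Submodule.subset_span ⟨j, hj, rfl⟩
    refine finrank_le_of_spanning hp.pos hspan g (by simpa [hg] using hn1) ?_ ?_ ?_
    · -- h stability
      intro i hi
      have h3 := P.lie_h_pow_toEnd_f i
      rw [neg_lie] at h3
      have h4 : ⁅h, g i⁆ = -((-(lam - 2 * (n : k)) - 2 * i) • g i) := neg_eq_iff_eq_neg.mp h3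
      rw [h4]
      exact Wsub.neg_mem (Wsub.smul_mem _ (hgmem i hi))
    · -- e stability
      intro i hi
      rw [hgE i]
      rcases lt_or_eq_of_le (Nat.succ_le_of_lt hi) with hlt | heq
      · exact hgmem _ hlt
      · have heq' : i + 1 = p := heq
        have h5 : g (i + 1) = a • g 0 := by
          show (E ^ (i + 1)) v = a • (E ^ 0) v
          rw [heq', ha]
          simp
        rw [h5]
        exact Wsub.smul_mem _ (hgmem 0 hp.pos)
    · -- f stability
      intro i hi
      match i with
      | 0 =>
        have h6 : g 0 = v := by simp [hg]
        rw [h6, hfv]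
        exact Wsub.zero_mem
      | (j + 1) =>
        have h7 := P.lie_e_pow_succ_toEnd_f j
        rw [show ⁅f, g (j + 1)⁆ = ⁅f, ((toEnd k L V e) ^ (j + 1)) v⁆ from rfl, h7]
        exact Wsub.smul_mem _ (hgmem j (Nat.lt_of_succ_lt hi))
  · -- Case b ≠ 0 : F is invertible; find a common eigenvector of H and F∘E
    have hFb : F ^ p = b • 1 := hb
    have hp1 : 1 ≤ p := hp.one_lt.le
    -- operator-level relations
    have relHE : ∀ v : V, H (E v) = E (H v) + (2 : k) • E v := by
      intro v
      show toEnd k L V h (toEnd k L V e v) = _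
      rw [toEnd_apply_apply, toEnd_apply_apply, leibniz_lie h, t.lie_h_e_smul k, smul_lie]
      exact add_comm _ _
    have relHF : ∀ v : V, H (F v) = F (H v) - (2 : k) • F v := by
      intro v
      show toEnd k L V h (toEnd k L V f v) = _
      rw [toEnd_apply_apply, toEnd_apply_apply, leibniz_lie h, t.lie_lie_smul_f k, neg_lie,
        smul_lie]
      exact neg_add_eq_sub _ _
    set S := Module.End.eigenspace H lam with hS
    have hSinv : ∀ v ∈ S, (F * E) v ∈ S := by
      intro v hv
      have hv' : H v = lam • v := Module.End.mem_eigenspace_iff.mp hv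
      refine Module.End.mem_eigenspace_iff.mpr ?_
      rw [Module.End.mul_apply, relHF, relHE, hv', map_add, map_smul, map_smul, map_smul]
      exact add_sub_cancel_right _ _
    have hw₀S : w₀ ∈ S := Module.End.mem_eigenspace_iff.mpr hw₀.apply_eq_smul
    have : Nontrivial S := by
      refine ⟨⟨⟨w₀, hw₀S⟩, 0, ?_⟩⟩
      intro hcon
      exact hw₀.right (by simpa using congrArg Subtype.val hcon)
    set G := (F * E).restrict hSinv with hG
    obtain ⟨θ, hθ⟩ := Module.End.exists_eigenvalue G
    obtain ⟨w', hw'⟩ := hθ.exists_hasEigenvector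
    set w : V := (w' : V) with hwdef
    have hwne : w ≠ 0 := fun hh => hw'.right (by exact Subtype.ext hh)
    have hwS : H w = lam • w := Module.End.mem_eigenspace_iff.mp w'.2
    have hwlie : ⁅h, w⁆ = lam • w := by
      rw [← toEnd_apply_apply k, ← hH]; exact hwS
    have hFEw : F (E w) = θ • w := by
      have h8 := hw'.apply_eq_smul
      have h9 := congrArg (Subtype.val : S → V) h8
      rw [hG] at h9
      rw [← Module.End.mul_apply]
      simpa [LinearMap.restrict_coe_apply] using h9
    -- F is injective
    have hleft : (b⁻¹ • F ^ (p - 1)) * F = 1 := by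
      rw [smul_mul_assoc, ← pow_succ, Nat.sub_add_cancel hp1, hFb, smul_smul,
        inv_mul_cancel₀ hbz, one_smul]
    have hFinj : Function.Injective F := by
      intro x y hxy
      calc x = ((b⁻¹ • F ^ (p - 1)) * F) x := by rw [hleft]; rfl
        _ = (b⁻¹ • F ^ (p - 1)) (F y) := by
            rw [Module.End.mul_apply, hxy]
        _ = ((b⁻¹ • F ^ (p - 1)) * F) y := by rw [Module.End.mul_apply]
        _ = y := by rw [hleft]; rfl
    have hEw : E w = (θ * b⁻¹) • (F ^ (p - 1)) w := by
      apply hFinj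
      rw [hFEw, map_smul, ← Module.End.mul_apply F (F ^ (p - 1)), ← pow_succ',
        show p - 1 + 1 = p from Nat.sub_add_cancel hp1, hFb]
      show θ • w = (θ * b⁻¹) • b • w
      rw [smul_smul, mul_assoc, inv_mul_cancel₀ hbz, mul_one]
    have hewlie : ⁅e, w⁆ = (θ * b⁻¹) • (F ^ (p - 1)) w := by
      rw [← toEnd_apply_apply k, ← hE]; exact hEw
    set g : ℕ → V := fun i => (F ^ i) w with hg
    have hgF : ∀ j, ⁅f, g j⁆ = g (j + 1) := by
      intro j
      show ⁅f, g j⁆ = (F ^ (j + 1)) w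
      rw [pow_succ', Module.End.mul_apply]
      exact (toEnd_apply_apply k L V f ((F ^ j) w)).symm
    set Wsub := Submodule.span k (g '' Set.Iio p) with hWsub
    have hgmem : ∀ j, j < p → g j ∈ Wsub := fun j hj => Submodule.subset_span ⟨j, hj, rfl⟩
    refine finrank_le_of_spanning hp.pos hspan g (by simpa [hg] using hwne) ?_ ?_ ?_
    · -- h stability
      intro i hi
      have h3 : ⁅h, g i⁆ = (lam - 2 * (i : k)) • g i := my_lie_h_pow t hwlie i
      rw [h3]
      exact Wsub.smul_mem _ (hgmem i hi)
    · -- e stability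
      intro i hi
      match i with
      | 0 =>
        have h6 : g 0 = w := by simp [hg]
        rw [h6, hewlie]
        exact Wsub.smul_mem _ (hgmem (p - 1) (Nat.sub_lt hp.pos one_pos))
      | (j + 1) =>
        have h7 : ⁅e, g (j + 1)⁆ = (F ^ (j + 1)) ⁅e, w⁆
            + (((j : k) + 1) * (lam - j)) • g j := my_lie_e_pow t hwlie j
        have h8 : (F ^ (j + 1)) ⁅e, w⁆ = (θ * b⁻¹ * b) • g j := by
          rw [hewlie, map_smul, ← Module.End.mul_apply, ← pow_add,
            show j + 1 + (p - 1) = j + p by omega, pow_add, Module.End.mul_apply, hFb]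
          show (θ * b⁻¹) • (F ^ j) (b • w) = _
          rw [map_smul, smul_smul]
        rw [h7, h8]
        exact Wsub.add_mem (Wsub.smul_mem _ (hgmem j (Nat.lt_of_succ_lt hi)))
          (Wsub.smul_mem _ (hgmem j (Nat.lt_of_succ_lt hi)))
    · -- f stability
      intro i hi
      rw [hgF i]
      rcases lt_or_eq_of_le (Nat.succ_le_of_lt hi) with hlt | heq
      · exact hgmem _ hlt
      · have heq' : i + 1 = p := heq
        have h5 : g (i + 1) = b • g 0 := by
          show (F ^ (i + 1)) w = b • (F ^ 0) w
          rw [heq', hFb]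
          simp
        rw [h5]
        exact Wsub.smul_mem _ (hgmem 0 hp.pos)

end Master





section Sl2Concrete

variable (k : Type*) [Field k]

def sH : sl (Fin 2) k :=
  ⟨!![1, 0; 0, -1],
    show _ ∈ LinearMap.ker (Matrix.traceLinearMap (Fin 2) k k) from
      LinearMap.mem_ker.mpr (by simp [Matrix.trace_fin_two])⟩

def sE : sl (Fin 2) k := LieAlgebra.SpecialLinear.single 0 1 (by decide) (1 : k)
def sF : sl (Fin 2) k := LieAlgebra.SpecialLinear.single 1 0 (by decide) (1 : k)

lemma sH_val : (sH k).val = !![1, 0; 0, -1] := rfl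
lemma sE_val : (sE k).val = Matrix.single 0 1 1 := rfl
lemma sF_val : (sF k).val = Matrix.single 1 0 1 := rfl

lemma sl2_triple : IsSl2Triple (sH k) (sE k) (sF k) where
  h_ne_zero := by
    intro hcon
    have := congrArg (fun z : sl (Fin 2) k => z.val 0 0) hcon
    simp [sH_val] at this
  lie_e_f := by
    apply Subtype.ext
    show (sE k).val * (sF k).val - (sF k).val * (sE k).val = (sH k).val
    rw [sE_val, sF_val, sH_val]
    ext i j
    fin_cases i <;> fin_cases j <;>
      simp [Matrix.mul_apply, Matrix.single, Fin.sum_univ_two,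
        Matrix.vecHead, Matrix.vecTail]
  lie_h_e_nsmul := by
    apply Subtype.ext
    show (sH k).val * (sE k).val - (sE k).val * (sH k).val
        = ((2 • sE k : sl (Fin 2) k) : Matrix (Fin 2) (Fin 2) k)
    have h2 : ((2 • sE k : sl (Fin 2) k) : Matrix (Fin 2) (Fin 2) k) = 2 • (sE k).val := rfl
    rw [h2, sE_val, sH_val]
    ext i j
    fin_cases i <;> fin_cases j <;>
      simp [Matrix.mul_apply, Matrix.single, Fin.sum_univ_two,
        Matrix.vecHead, Matrix.vecTail] <;> ring
  lie_h_f_nsmul := by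
    apply Subtype.ext
    show (sH k).val * (sF k).val - (sF k).val * (sH k).val
        = -((2 • sF k : sl (Fin 2) k) : Matrix (Fin 2) (Fin 2) k)
    have h2 : ((2 • sF k : sl (Fin 2) k) : Matrix (Fin 2) (Fin 2) k) = 2 • (sF k).val := rfl
    rw [h2, sF_val, sH_val]
    ext i j
    fin_cases i <;> fin_cases j <;>
      simp [Matrix.mul_apply, Matrix.single, Fin.sum_univ_two,
        Matrix.vecHead, Matrix.vecTail] <;> ring

lemma sl2_span (x : sl (Fin 2) k) :
    x ∈ Submodule.span k ({sH k, sE k, sF k} : Set (sl (Fin 2) k)) := by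
  have htr : Matrix.trace (x.val) = 0 := x.2
  rw [Matrix.trace_fin_two] at htr
  have hx : x = x.val 0 0 • sH k + x.val 0 1 • sE k + x.val 1 0 • sF k := by
    apply Subtype.ext
    show x.val = x.val 0 0 • (sH k).val + x.val 0 1 • (sE k).val + x.val 1 0 • (sF k).val
    rw [sH_val, sE_val, sF_val]
    ext i j
    fin_cases i <;> fin_cases j <;>
      simp [Matrix.single, Matrix.vecHead, Matrix.vecTail] <;>
      linear_combination htr
  rw [hx]
  refine Submodule.add_mem _ (Submodule.add_mem _ ?_ ?_) ?_
  · exact Submodule.smul_mem _ _ (Submodule.subset_span (by simp))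
  · exact Submodule.smul_mem _ _ (Submodule.subset_span (by simp))
  · exact Submodule.smul_mem _ _ (Submodule.subset_span (by simp))

end Sl2Concrete


open LieAlgebra.SpecialLinear

/-- Over an algebraically closed field of characteristic `p > 2`, every finite-dimensional
irreducible representation of `sl₂` has dimension at most `p`. -/
theorem sl2_irreducible_dim_le_char {k : Type*} [Field k] [IsAlgClosed k]
    (p : ℕ) [CharP k p] (hp : p.Prime) (hp2 : 2 < p)
    (V : Type*) [AddCommGroup V] [Module k V] [FiniteDimensional k V]
    [LieRingModule (sl (Fin 2) k) V] [LieModule k (sl (Fin 2) k) V]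
    [LieModule.IsIrreducible k (sl (Fin 2) k) V] :
    Module.finrank k V ≤ p :=
  master p hp hp2 (sl2_triple k) (sl2_span k)
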